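/- Any unit normal vector to the plane containing a nondegenerate equilateral triangle whose three vertices lie in ℤ³ is of the form (a,b,c)/(d√3) for some integers a, b, c, d with a²+b²+c²=3d² and d ≠ 0. -/

import Mathlib

/-- Casting a vector of integers to a point of `ℝ³` (with the Euclidean structure). -/
noncomputable def intVec (v : Fin 3 → ℤ) : EuclideanSpace ℝ (Fin 3) :=
  (WithLp.equiv 2 (Fin 3 → ℝ)).symm fun i => (v i : ℝ)

lemma key_normal (u0 u1 u2 v0 v1 v2 n0 n1 n2 : ℝ)
    (e1 : u0^2+u1^2+u2^2 = (u0-v0)^2+(u1-v1)^2+(u2-v2)^2)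
    (e2 : (u0-v0)^2+(u1-v1)^2+(u2-v2)^2 = v0^2+v1^2+v2^2)
    (hnorm : n0^2+n1^2+n2^2 = 1)
    (h1 : n0*u0+n1*u1+n2*u2 = 0)
    (h2 : n0*v0+n1*v1+n2*v2 = 0)
    (hune : u0^2+u1^2+u2^2 ≠ 0) :
    0 < u0*v0+u1*v1+u2*v2 ∧
    (u1*v2-u2*v1)^2 + (u2*v0-u0*v2)^2 + (u0*v1-u1*v0)^2 = 3*(u0*v0+u1*v1+u2*v2)^2 ∧
    ∃ c : ℝ,
      (c * ((u0*v0+u1*v1+u2*v2) * Real.sqrt 3) = 1 ∨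
       c * ((u0*v0+u1*v1+u2*v2) * Real.sqrt 3) = -1) ∧
      n0 = c * (u1*v2-u2*v1) ∧ n1 = c * (u2*v0-u0*v2) ∧ n2 = c * (u0*v1-u1*v0) := by
  have hs1 : u0^2+u1^2+u2^2 = 2*(u0*v0+u1*v1+u2*v2) := by linear_combination e2
  have hs2 : v0^2+v1^2+v2^2 = 2*(u0*v0+u1*v1+u2*v2) := by linear_combination -e1
  have ht : 0 < u0*v0+u1*v1+u2*v2 := by
    rcases lt_or_eq_of_le (by positivity : (0:ℝ) ≤ u0^2+u1^2+u2^2) with h | h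
    · linarith
    · exact absurd h.symm hune
  have hwuv : (u1*v2-u2*v1)^2 + (u2*v0-u0*v2)^2 + (u0*v1-u1*v0)^2
      = 3*(u0*v0+u1*v1+u2*v2)^2 := by
    linear_combination (v0^2+v1^2+v2^2) * hs1 + 2*(u0*v0+u1*v1+u2*v2) * hs2
  refine ⟨ht, hwuv, ?_⟩
  obtain ⟨w0, w1, w2, t, hw0, hw1, hw2, htd⟩ :
      ∃ w0 w1 w2 t : ℝ, w0 = u1*v2-u2*v1 ∧ w1 = u2*v0-u0*v2 ∧ w2 = u0*v1-u1*v0 ∧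
        t = u0*v0+u1*v1+u2*v2 := ⟨_, _, _, _, rfl, rfl, rfl, rfl⟩
  rw [← hw0, ← hw1, ← hw2, ← htd]
  rw [← htd] at ht
  have hw : w0^2+w1^2+w2^2 = 3*t^2 := by rw [hw0, hw1, hw2, htd]; exact hwuv
  have hc0 : n1*w2 - n2*w1 = 0 := by rw [hw1, hw2]; linear_combination u0*h2 - v0*h1
  have hc1 : n2*w0 - n0*w2 = 0 := by rw [hw0, hw2]; linear_combination u1*h2 - v1*h1
  have hc2 : n0*w1 - n1*w0 = 0 := by rw [hw0, hw1]; linear_combination u2*h2 - v2*h1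
  obtain ⟨N, hN⟩ : ∃ N : ℝ, N = n0*w0+n1*w1+n2*w2 := ⟨_, rfl⟩
  have comp0 : n0 * (3*t^2) = N * w0 := by
    linear_combination w1*hc2 - w2*hc1 - n0*hw - w0*hN
  have comp1 : n1 * (3*t^2) = N * w1 := by
    linear_combination -w0*hc2 + w2*hc0 - n1*hw - w1*hN
  have comp2 : n2 * (3*t^2) = N * w2 := by
    linear_combination w0*hc1 - w1*hc0 - n2*hw - w2*hN
  have hN2 : N^2 = 3*t^2 := by
    linear_combination N*hN - (n0*comp0 + n1*comp1 + n2*comp2) + 3*t^2*hnorm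
  have hNne : N ≠ 0 := by intro h; rw [h] at hN2; nlinarith
  have hsq3 : Real.sqrt 3 ^ 2 = 3 := Real.sq_sqrt (by norm_num)
  have hfac : (t * Real.sqrt 3 - N) * (t * Real.sqrt 3 + N) = 0 := by
    linear_combination t^2*hsq3 - hN2
  have e0 : n0 * N = w0 := by
    apply mul_left_cancel₀ hNne; linear_combination n0*hN2 + comp0
  have e1' : n1 * N = w1 := by
    apply mul_left_cancel₀ hNne; linear_combination n1*hN2 + comp1
  have e2' : n2 * N = w2 := by
    apply mul_left_cancel₀ hNne; linear_combination n2*hN2 + comp2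
  refine ⟨1/N, ?_, ?_, ?_, ?_⟩
  · rcases mul_eq_zero.mp hfac with h | h
    · left; field_simp; linarith
    · right; field_simp; linarith
  · field_simp; linear_combination e0
  · field_simp; linear_combination e1'
  · field_simp; linear_combination e2'


/-- Any unit normal vector to the plane of a nondegenerate equilateral triangle with
vertices in `ℤ³` has the form `(a,b,c)/(d√3)` with `a²+b²+c² = 3d²`, `d ≠ 0`. -/
theorem unit_normal_of_integer_equilateral_triangle
    (A B C : Fin 3 → ℤ)
    (hAB : A ≠ B) (hBC : B ≠ C) (hCA : C ≠ A)
    (heq1 : dist (intVec A) (intVec B) = dist (intVec B) (intVec C))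
    (heq2 : dist (intVec B) (intVec C) = dist (intVec C) (intVec A))
    (n : EuclideanSpace ℝ (Fin 3)) (hn : ‖n‖ = 1)
    (hn1 : (inner ℝ n (intVec B - intVec A) : ℝ) = 0)
    (hn2 : (inner ℝ n (intVec C - intVec A) : ℝ) = 0) :
    ∃ a b c d : ℤ, d ≠ 0 ∧ a ^ 2 + b ^ 2 + c ^ 2 = 3 * d ^ 2 ∧
      n = (1 / ((d : ℝ) * Real.sqrt 3)) •
        ((WithLp.equiv 2 (Fin 3 → ℝ)).symm ![(a : ℝ), (b : ℝ), (c : ℝ)]) := by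
  have e1 : ((A 0:ℝ)-B 0)^2 + ((A 1:ℝ)-B 1)^2 + ((A 2:ℝ)-B 2)^2
      = ((B 0:ℝ)-C 0)^2 + ((B 1:ℝ)-C 1)^2 + ((B 2:ℝ)-C 2)^2 := by
    have e : dist (intVec A) (intVec B) ^2 = dist (intVec B) (intVec C)^2 := by rw [heq1]
    simp only [EuclideanSpace.dist_eq, Real.dist_eq, Fin.sum_univ_three, intVec,
      WithLp.equiv_symm_apply, PiLp.toLp_apply] at e
    rw [Real.sq_sqrt (by positivity), Real.sq_sqrt (by positivity)] at e
    simpa [sq_abs] using e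
  have e2 : ((B 0:ℝ)-C 0)^2 + ((B 1:ℝ)-C 1)^2 + ((B 2:ℝ)-C 2)^2
      = ((C 0:ℝ)-A 0)^2 + ((C 1:ℝ)-A 1)^2 + ((C 2:ℝ)-A 2)^2 := by
    have e : dist (intVec B) (intVec C) ^2 = dist (intVec C) (intVec A)^2 := by rw [heq2]
    simp only [EuclideanSpace.dist_eq, Real.dist_eq, Fin.sum_univ_three, intVec,
      WithLp.equiv_symm_apply, PiLp.toLp_apply] at e
    rw [Real.sq_sqrt (by positivity), Real.sq_sqrt (by positivity)] at e
    simpa [sq_abs] using e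
  have hnorm : n 0 ^2 + n 1^2 + n 2^2 = 1 := by
    have := congrArg (·^2) hn
    simp only [EuclideanSpace.norm_eq, Real.norm_eq_abs, Fin.sum_univ_three] at this
    rw [Real.sq_sqrt (by positivity)] at this
    simpa [sq_abs] using this
  simp only [PiLp.inner_apply, RCLike.inner_apply, conj_trivial, Fin.sum_univ_three,
    PiLp.sub_apply, intVec, WithLp.equiv_symm_apply, PiLp.toLp_apply] at hn1 hn2
  have hune : ((B 0:ℝ)-A 0)^2 + ((B 1:ℝ)-A 1)^2 + ((B 2:ℝ)-A 2)^2 ≠ 0 := by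
    intro h
    apply hAB
    funext i
    have k0 : ((B 0:ℝ)-A 0)^2 = 0 := by
      linarith [sq_nonneg ((B 0:ℝ)-A 0), sq_nonneg ((B 1:ℝ)-A 1), sq_nonneg ((B 2:ℝ)-A 2)]
    have k1 : ((B 1:ℝ)-A 1)^2 = 0 := by
      linarith [sq_nonneg ((B 0:ℝ)-A 0), sq_nonneg ((B 1:ℝ)-A 1), sq_nonneg ((B 2:ℝ)-A 2)]
    have k2 : ((B 2:ℝ)-A 2)^2 = 0 := by
      linarith [sq_nonneg ((B 0:ℝ)-A 0), sq_nonneg ((B 1:ℝ)-A 1), sq_nonneg ((B 2:ℝ)-A 2)]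
    have m0 : (A 0:ℝ) = B 0 := by
      have := (pow_eq_zero_iff two_ne_zero).mp k0; linarith
    have m1 : (A 1:ℝ) = B 1 := by
      have := (pow_eq_zero_iff two_ne_zero).mp k1; linarith
    have m2 : (A 2:ℝ) = B 2 := by
      have := (pow_eq_zero_iff two_ne_zero).mp k2; linarith
    fin_cases i
    · exact_mod_cast m0
    · exact_mod_cast m1
    · exact_mod_cast m2
  obtain ⟨ht, hw, c, hcase, hc0, hc1, hc2⟩ :=
    key_normal ((B 0:ℝ)-A 0) ((B 1:ℝ)-A 1) ((B 2:ℝ)-A 2)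
      ((C 0:ℝ)-A 0) ((C 1:ℝ)-A 1) ((C 2:ℝ)-A 2) (n 0) (n 1) (n 2)
      (by linear_combination e1) (by linear_combination e2) hnorm
      (by linear_combination hn1) (by linear_combination hn2) hune
  -- integer data
  set T : ℤ := (B 0-A 0)*(C 0-A 0) + (B 1-A 1)*(C 1-A 1) + (B 2-A 2)*(C 2-A 2) with hT
  set a : ℤ := (B 1-A 1)*(C 2-A 2) - (B 2-A 2)*(C 1-A 1) with ha
  set b : ℤ := (B 2-A 2)*(C 0-A 0) - (B 0-A 0)*(C 2-A 2) with hb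
  set c' : ℤ := (B 0-A 0)*(C 1-A 1) - (B 1-A 1)*(C 0-A 0) with hc'
  have hTcast : (T:ℝ) = ((B 0:ℝ)-A 0)*((C 0:ℝ)-A 0) + ((B 1:ℝ)-A 1)*((C 1:ℝ)-A 1)
      + ((B 2:ℝ)-A 2)*((C 2:ℝ)-A 2) := by rw [hT]; push_cast; ring
  have hacast : (a:ℝ) = ((B 1:ℝ)-A 1)*((C 2:ℝ)-A 2) - ((B 2:ℝ)-A 2)*((C 1:ℝ)-A 1) := by
    rw [ha]; push_cast; ring
  have hbcast : (b:ℝ) = ((B 2:ℝ)-A 2)*((C 0:ℝ)-A 0) - ((B 0:ℝ)-A 0)*((C 2:ℝ)-A 2) := by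
    rw [hb]; push_cast; ring
  have hccast : (c':ℝ) = ((B 0:ℝ)-A 0)*((C 1:ℝ)-A 1) - ((B 1:ℝ)-A 1)*((C 0:ℝ)-A 0) := by
    rw [hc']; push_cast; ring
  have hTpos : (0:ℝ) < (T:ℝ) := by rw [hTcast]; exact ht
  have hTne : T ≠ 0 := by
    intro h; rw [h] at hTpos; norm_num at hTpos
  have hsum : a^2 + b^2 + c'^2 = 3*T^2 := by
    have : (↑(a^2 + b^2 + c'^2) : ℝ) = ((3*T^2 : ℤ) : ℝ) := by
      push_cast
      rw [hacast, hbcast, hccast, hTcast]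
      exact hw
    exact_mod_cast this
  have hs3 : Real.sqrt 3 ≠ 0 := by positivity
  have hcompRHS : ∀ (d : ℤ) (i : Fin 3),
      ((1 / ((d : ℝ) * Real.sqrt 3)) •
        ((WithLp.equiv 2 (Fin 3 → ℝ)).symm ![(a : ℝ), (b : ℝ), (c' : ℝ)])) i
      = (1 / ((d : ℝ) * Real.sqrt 3)) * (![(a : ℝ), (b : ℝ), (c' : ℝ)] i) := by
    intro d i
    simp [PiLp.smul_apply, WithLp.equiv_symm_apply, PiLp.toLp_apply]
  rcases hcase with hcs | hcs
  · have hceq : c = 1 / ((T:ℝ) * Real.sqrt 3) := by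
      rw [eq_div_iff (by positivity)]
      rw [hTcast]
      linear_combination hcs
    refine ⟨a, b, c', T, hTne, hsum, ?_⟩
    ext i
    rw [hcompRHS T i, ← hceq]
    fin_cases i
    · simpa [hacast] using hc0
    · simpa [hbcast] using hc1
    · simpa [hccast] using hc2
  · have hceq : c = 1 / (((-T : ℤ):ℝ) * Real.sqrt 3) := by
      rw [eq_div_iff (by push_cast; simp; positivity)]
      push_cast
      rw [hTcast]
      linear_combination -hcs
    refine ⟨a, b, c', -T, neg_ne_zero.mpr hTne, by linarith [hsum], ?_⟩
    ext i
    rw [hcompRHS (-T) i, ← hceq]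
    fin_cases i
    · simpa [hacast] using hc0
    · simpa [hbcast] using hc1
    · simpa [hccast] using hc2
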